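/- Let E be a finite ground set, f : Set E → ℝ submodular, λ ≥ 0 with (1−ε)λ ≤ f({e}) ≤ λ for all e ∈ E, and let S be a random subset sampling each element independently with probability δ. Define Q = { e ∈ S : f_{S−e}(e) ≥ (1−ε)λ }. If E[|{ e ∈ E : f_S(e) ≤ (1−ε)λ }|] ≤ ε|E|, then E[f(Q)] ≥ (1−ε)² λ δ |E| = (1−ε)² λ E[|S|]. -/
import Mathlib


open scoped Classical
open Finset

/-- The probability that an independent `δ`-sample of the ground set equals `s`. -/
noncomputable def sampleWeight {E : Type*} [Fintype E] (δ : ℝ) (s : Finset E) : ℝ :=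
  δ ^ s.card * (1 - δ) ^ (Fintype.card E - s.card)

private lemma gsm_binom {E : Type*} [DecidableEq E] [Fintype E] (δ : ℝ) (A : Finset E) :
    ∑ t ∈ A.powerset, δ ^ t.card * (1 - δ) ^ (A.card - t.card) = 1 := by
  calc ∑ t ∈ A.powerset, δ ^ t.card * (1 - δ) ^ (A.card - t.card)
      = ∑ t ∈ A.powerset, (∏ _i ∈ t, δ) * ∏ _i ∈ A \ t, (1 - δ) := by
        refine Finset.sum_congr rfl fun t ht => ?_
        rw [Finset.prod_const, Finset.prod_const,
          Finset.card_sdiff_of_subset (Finset.mem_powerset.mp ht)]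
    _ = ∏ _i ∈ A, (δ + (1 - δ)) := (Finset.prod_add _ _ _).symm
    _ = 1 := by simp

private lemma gsm_pair {E : Type*} [DecidableEq E] [Fintype E] (e : E) (φ : Finset E → ℝ) :
    ∑ s : Finset E, φ s =
      ∑ t ∈ ((univ : Finset E).erase e).powerset, (φ t + φ (insert e t)) := by
  have hA : (univ : Finset (Finset E)).filter (fun s => e ∉ s)
      = ((univ : Finset E).erase e).powerset := by
    ext t; simp [Finset.subset_erase]
  have hB : ∑ s ∈ (univ : Finset (Finset E)).filter (fun s => e ∈ s), φ s
      = ∑ t ∈ ((univ : Finset E).erase e).powerset, φ (insert e t) := by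
    refine Finset.sum_nbij' (fun s => s.erase e) (fun t => insert e t) ?_ ?_ ?_ ?_ ?_
    · intro s hs
      simp only [Finset.mem_filter, Finset.mem_univ, true_and] at hs
      simp [Finset.mem_powerset, Finset.subset_erase]
    · intro t ht; simp
    · intro s hs
      simp only [Finset.mem_filter, Finset.mem_univ, true_and] at hs
      exact Finset.insert_erase hs
    · intro t ht
      have het : e ∉ t := (Finset.subset_erase.mp (Finset.mem_powerset.mp ht)).2
      exact Finset.erase_insert het
    · intro s hs
      simp only [Finset.mem_filter, Finset.mem_univ, true_and] at hs
      rw [Finset.insert_erase hs]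
  calc ∑ s : Finset E, φ s
      = ∑ s ∈ (univ : Finset (Finset E)).filter (fun s => e ∈ s), φ s
        + ∑ s ∈ (univ : Finset (Finset E)).filter (fun s => ¬ e ∈ s), φ s :=
        (Finset.sum_filter_add_sum_filter_not _ _ _).symm
    _ = ∑ t ∈ ((univ : Finset E).erase e).powerset, φ (insert e t)
        + ∑ t ∈ ((univ : Finset E).erase e).powerset, φ t := by rw [hB, hA]
    _ = _ := by rw [← Finset.sum_add_distrib]; exact Finset.sum_congr rfl fun t _ => add_comm _ _

private lemma gsm_pointwise {E : Type*} [DecidableEq E] (f : Finset E → ℝ) (hf0 : f ∅ = 0)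
    (hsub : ∀ A B : Finset E, f (A ∪ B) + f (A ∩ B) ≤ f A + f B)
    (c : ℝ) (s : Finset E) :
    ∀ Q : Finset E, Q ⊆ s → (∀ e ∈ Q, c ≤ f s - f (s.erase e)) → c * Q.card ≤ f Q := by
  intro Q
  induction Q using Finset.induction_on with
  | empty => intro _ _; simp [hf0]
  | @insert a Q ha ih =>
    intro hQs hcond
    have has : a ∈ s := hQs (Finset.mem_insert_self a Q)
    have hQs' : Q ⊆ s := (Finset.subset_insert a Q).trans hQs
    have h1 : c ≤ f s - f (s.erase a) := hcond a (Finset.mem_insert_self a Q)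
    have hu : insert a Q ∪ s.erase a = s := by
      apply Finset.Subset.antisymm
      · exact Finset.union_subset hQs (Finset.erase_subset _ _)
      · intro x hx
        by_cases hxa : x = a
        · subst hxa; exact Finset.mem_union_left _ (Finset.mem_insert_self _ _)
        · exact Finset.mem_union_right _ (Finset.mem_erase.mpr ⟨hxa, hx⟩)
    have hi : insert a Q ∩ s.erase a = Q := by
      ext x
      simp only [Finset.mem_inter, Finset.mem_insert, Finset.mem_erase]
      constructor
      · rintro ⟨h1 | h1, h2, h3⟩
        · exact absurd h1 h2
        · exact h1
      · intro hx
        exact ⟨Or.inr hx, fun hxa => ha (hxa ▸ hx), hQs' hx⟩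
    have hsubm := hsub (insert a Q) (s.erase a)
    rw [hu, hi] at hsubm
    have hih := ih hQs' (fun e he => hcond e (Finset.mem_insert_of_mem he))
    rw [Finset.card_insert_of_notMem ha]
    push_cast
    linarith

/-- claim (a) in the analysis of greedy sampling: with
`(1−ε)λ ≤ f({e}) ≤ λ` for all `e`, `S` an independent `δ`-sample, and
`Q = {e ∈ S : f_{S−e}(e) ≥ (1−ε)λ}`, if
`E[#{e : f_S(e) ≤ (1−ε)λ}] ≤ ε|E|` then
`E[f(Q)] ≥ (1−ε)²λδ|E| = (1−ε)²λ E[|S|]`. -/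
theorem greedy_sample_margin {E : Type*} [DecidableEq E] [Fintype E]
    (f : Finset E → ℝ) (hf0 : f ∅ = 0)
    (hsub : ∀ A B : Finset E, f (A ∪ B) + f (A ∩ B) ≤ f A + f B)
    (ε lam δ : ℝ) (hε : 0 ≤ ε) (hε1 : ε ≤ 1) (hlam : 0 ≤ lam)
    (hδ0 : 0 ≤ δ) (hδ1 : δ ≤ 1)
    (hmargin : ∀ e : E, (1 - ε) * lam ≤ f {e} ∧ f {e} ≤ lam)
    (hyp : ∑ s : Finset E, sampleWeight δ s *
        ((Finset.univ.filter
          (fun e : E => f (insert e s) - f s ≤ (1 - ε) * lam)).card : ℝ) ≤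
      ε * (Fintype.card E : ℝ)) :
    (1 - ε) ^ 2 * lam * (δ * (Fintype.card E : ℝ)) ≤
      ∑ s : Finset E, sampleWeight δ s *
        f (s.filter (fun e : E =>
          (1 - ε) * lam ≤ f (insert e (s.erase e)) - f (s.erase e))) ∧
    δ * (Fintype.card E : ℝ) =
      ∑ s : Finset E, sampleWeight δ s * (s.card : ℝ) := by
  have hδ1' : (0:ℝ) ≤ 1 - δ := by linarith
  have hw : ∀ s : Finset E, 0 ≤ sampleWeight δ s := fun s =>
    mul_nonneg (pow_nonneg hδ0 _) (pow_nonneg hδ1' _)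
  set c : ℝ := (1 - ε) * lam with hcdef
  have hc : 0 ≤ c := mul_nonneg (by linarith) hlam
  have htot : ∑ s : Finset E, sampleWeight δ s = 1 := by
    rw [show (univ : Finset (Finset E)) = (univ : Finset E).powerset from
      Finset.powerset_univ.symm]
    simpa [sampleWeight, Finset.card_univ] using gsm_binom δ (univ : Finset E)
  -- probability that a fixed element is in the sample
  have hPe : ∀ e : E,
      ∑ s : Finset E, sampleWeight δ s * (if e ∈ s then (1:ℝ) else 0) = δ := by
    intro e
    rw [gsm_pair e (fun s => sampleWeight δ s * (if e ∈ s then (1:ℝ) else 0))]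
    have hcer : ((univ : Finset E).erase e).card = Fintype.card E - 1 := by
      rw [Finset.card_erase_of_mem (Finset.mem_univ e), Finset.card_univ]
    calc ∑ t ∈ ((univ : Finset E).erase e).powerset,
          (sampleWeight δ t * (if e ∈ t then (1:ℝ) else 0) +
           sampleWeight δ (insert e t) * (if e ∈ insert e t then (1:ℝ) else 0))
        = ∑ t ∈ ((univ : Finset E).erase e).powerset,
            δ * (δ ^ t.card * (1 - δ) ^ (((univ : Finset E).erase e).card - t.card)) := by
          refine Finset.sum_congr rfl fun t ht => ?_
          have het : e ∉ t := (Finset.subset_erase.mp (Finset.mem_powerset.mp ht)).2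
          rw [if_neg het, if_pos (Finset.mem_insert_self e t)]
          simp only [sampleWeight, mul_zero, zero_add, mul_one,
            Finset.card_insert_of_notMem het]
          have h2 : Fintype.card E - (t.card + 1)
              = ((univ : Finset E).erase e).card - t.card := by
            rw [hcer]; omega
          rw [h2, pow_succ]
          ring
      _ = δ := by rw [← Finset.mul_sum, gsm_binom]; ring
  -- step lemma on weights
  have hwstep : ∀ (e : E) (t : Finset E), e ∉ t →
      δ * sampleWeight δ t ≤ sampleWeight δ (insert e t) := by
    intro e t het
    have hcard : (insert e t).card = t.card + 1 := Finset.card_insert_of_notMem het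
    have hle : t.card + 1 ≤ Fintype.card E := by
      rw [← hcard]; exact Finset.card_le_univ _
    unfold sampleWeight
    rw [hcard]
    have h1 : Fintype.card E - t.card = (Fintype.card E - (t.card + 1)) + 1 := by omega
    rw [h1, pow_succ, pow_succ]
    have h2 : (0:ℝ) ≤ (1 - δ) ^ (Fintype.card E - (t.card + 1)) := pow_nonneg hδ1' _
    have h3 : (0:ℝ) ≤ δ ^ t.card := pow_nonneg hδ0 _
    nlinarith [mul_nonneg (mul_nonneg hδ0 h3) h2]
  -- key per-element inequality
  have hkey : ∀ e : E,
      δ * (1 - ∑ s : Finset E, sampleWeight δ s *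
            (if f (insert e s) - f s ≤ c then (1:ℝ) else 0))
        ≤ ∑ s : Finset E, sampleWeight δ s *
            (if e ∈ s ∧ c ≤ f (insert e (s.erase e)) - f (s.erase e) then (1:ℝ) else 0) := by
    intro e
    have hP : ∀ t ∈ ((univ : Finset E).erase e).powerset, e ∉ t := fun t ht =>
      (Finset.subset_erase.mp (Finset.mem_powerset.mp ht)).2
    have hBeq : ∑ s : Finset E, sampleWeight δ s *
          (if f (insert e s) - f s ≤ c then (1:ℝ) else 0)
        = ∑ t ∈ ((univ : Finset E).erase e).powerset,
            (sampleWeight δ t * (if f (insert e t) - f t ≤ c then (1:ℝ) else 0)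
              + sampleWeight δ (insert e t)) := by
      rw [gsm_pair e (fun s => sampleWeight δ s *
        (if f (insert e s) - f s ≤ c then (1:ℝ) else 0))]
      refine Finset.sum_congr rfl fun t ht => ?_
      have h0 : f (insert e (insert e t)) - f (insert e t) ≤ c := by
        rw [Finset.insert_idem, sub_self]; exact hc
      rw [if_pos h0, mul_one]
    have hQeq : ∑ s : Finset E, sampleWeight δ s *
          (if e ∈ s ∧ c ≤ f (insert e (s.erase e)) - f (s.erase e) then (1:ℝ) else 0)
        = ∑ t ∈ ((univ : Finset E).erase e).powerset,
            sampleWeight δ (insert e t) * (if c ≤ f (insert e t) - f t then (1:ℝ) else 0) := by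
      rw [gsm_pair e (fun s => sampleWeight δ s *
        (if e ∈ s ∧ c ≤ f (insert e (s.erase e)) - f (s.erase e) then (1:ℝ) else 0))]
      refine Finset.sum_congr rfl fun t ht => ?_
      have het := hP t ht
      rw [Finset.erase_insert het]
      rw [if_neg (by simp [het]), mul_zero, zero_add]
      congr 1
      simp [Finset.mem_insert_self]
    have h1eq : (1:ℝ) = ∑ t ∈ ((univ : Finset E).erase e).powerset,
        (sampleWeight δ t + sampleWeight δ (insert e t)) := by
      rw [← gsm_pair e (sampleWeight δ), htot]
    rw [hBeq, hQeq]
    nth_rewrite 1 [h1eq]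
    rw [← Finset.sum_sub_distrib, Finset.mul_sum]
    refine Finset.sum_le_sum fun t ht => ?_
    have het := hP t ht
    by_cases hb : f (insert e t) - f t ≤ c
    · simp only [if_pos hb, mul_one, sub_self, mul_zero]
      exact mul_nonneg (hw _) (by split_ifs <;> norm_num)
    · have hg : c ≤ f (insert e t) - f t := le_of_lt (not_le.mp hb)
      simp only [if_neg hb, if_pos hg, mul_zero, zero_add, mul_one]
      have := hwstep e t het
      have h4 : sampleWeight δ t + sampleWeight δ (insert e t)
          - sampleWeight δ (insert e t) = sampleWeight δ t := by ring
      rw [h4]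
      exact this
  -- indicator rewrites
  have hbadcard : ∀ s : Finset E,
      ((Finset.univ.filter (fun e : E => f (insert e s) - f s ≤ c)).card : ℝ)
        = ∑ e : E, (if f (insert e s) - f s ≤ c then (1:ℝ) else 0) := by
    intro s; rw [Finset.sum_boole]
  have hQcard : ∀ s : Finset E,
      (((s.filter (fun e : E => c ≤ f (insert e (s.erase e)) - f (s.erase e))).card : ℝ))
        = ∑ e : E, (if e ∈ s ∧ c ≤ f (insert e (s.erase e)) - f (s.erase e)
            then (1:ℝ) else 0) := by
    intro s
    rw [Finset.sum_boole]
    norm_cast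
    congr 1
    ext x
    simp [Finset.mem_filter]
  have hcount : ∀ s : Finset E, (s.card : ℝ) = ∑ e : E, (if e ∈ s then (1:ℝ) else 0) := by
    intro s
    rw [Finset.sum_boole]
    congr 1
    simp
  constructor
  · -- main inequality
    have hswap : ∑ s : Finset E, sampleWeight δ s *
          ((s.filter (fun e : E => c ≤ f (insert e (s.erase e)) - f (s.erase e))).card : ℝ)
        = ∑ e : E, ∑ s : Finset E, sampleWeight δ s *
            (if e ∈ s ∧ c ≤ f (insert e (s.erase e)) - f (s.erase e) then (1:ℝ) else 0) := by
      simp_rw [hQcard, Finset.mul_sum]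
      exact Finset.sum_comm
    have hDe : ∑ e : E, ∑ s : Finset E, sampleWeight δ s *
          (if f (insert e s) - f s ≤ c then (1:ℝ) else 0) ≤ ε * (Fintype.card E : ℝ) := by
      rw [Finset.sum_comm]
      calc ∑ s : Finset E, ∑ e : E, sampleWeight δ s *
            (if f (insert e s) - f s ≤ c then (1:ℝ) else 0)
          = ∑ s : Finset E, sampleWeight δ s *
            ((Finset.univ.filter (fun e : E => f (insert e s) - f s ≤ c)).card : ℝ) := by
            refine Finset.sum_congr rfl fun s _ => ?_
            rw [hbadcard, Finset.mul_sum]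
        _ ≤ ε * (Fintype.card E : ℝ) := hyp
    have hsum1 : δ * (1 - ε) * (Fintype.card E : ℝ)
        ≤ ∑ s : Finset E, sampleWeight δ s *
            ((s.filter (fun e : E => c ≤ f (insert e (s.erase e)) - f (s.erase e))).card : ℝ) := by
      rw [hswap]
      have hbound := Finset.sum_le_sum (fun e (_ : e ∈ (univ : Finset E)) => hkey e)
      have h3 : ∑ e : E, δ * (1 - ∑ s : Finset E, sampleWeight δ s *
            (if f (insert e s) - f s ≤ c then (1:ℝ) else 0))
          = δ * (Fintype.card E : ℝ) - δ * ∑ e : E, ∑ s : Finset E, sampleWeight δ s *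
              (if f (insert e s) - f s ≤ c then (1:ℝ) else 0) := by
        rw [← Finset.mul_sum, Finset.sum_sub_distrib, Finset.sum_const, Finset.card_univ,
          nsmul_eq_mul, mul_one, mul_sub]
      have h5 : δ * (∑ e : E, ∑ s : Finset E, sampleWeight δ s *
            (if f (insert e s) - f s ≤ c then (1:ℝ) else 0))
          ≤ δ * (ε * (Fintype.card E : ℝ)) := mul_le_mul_of_nonneg_left hDe hδ0
      have := hbound
      rw [h3] at this
      nlinarith [this]
    have hptw : ∀ s : Finset E,
        c * ((s.filter (fun e : E => c ≤ f (insert e (s.erase e)) - f (s.erase e))).card : ℝ)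
          ≤ f (s.filter (fun e : E => c ≤ f (insert e (s.erase e)) - f (s.erase e))) := by
      intro s
      refine gsm_pointwise f hf0 hsub c s _ (Finset.filter_subset _ _) ?_
      intro e he
      have := Finset.mem_filter.mp he
      have h2 := this.2
      rwa [Finset.insert_erase this.1] at h2
    calc (1 - ε) ^ 2 * lam * (δ * (Fintype.card E : ℝ))
        = c * (δ * (1 - ε) * (Fintype.card E : ℝ)) := by rw [hcdef]; ring
      _ ≤ c * ∑ s : Finset E, sampleWeight δ s *
            ((s.filter (fun e : E => c ≤ f (insert e (s.erase e)) - f (s.erase e))).card : ℝ) :=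
          mul_le_mul_of_nonneg_left hsum1 hc
      _ = ∑ s : Finset E, sampleWeight δ s *
            (c * ((s.filter (fun e : E => c ≤ f (insert e (s.erase e)) - f (s.erase e))).card : ℝ)) := by
          rw [Finset.mul_sum]; exact Finset.sum_congr rfl fun s _ => by ring
      _ ≤ ∑ s : Finset E, sampleWeight δ s *
            f (s.filter (fun e : E => c ≤ f (insert e (s.erase e)) - f (s.erase e))) :=
          Finset.sum_le_sum fun s _ => mul_le_mul_of_nonneg_left (hptw s) (hw s)
  · -- expectation of |S|
    calc δ * (Fintype.card E : ℝ)
        = ∑ e : E, δ := by rw [Finset.sum_const, Finset.card_univ, nsmul_eq_mul, mul_comm]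
      _ = ∑ e : E, ∑ s : Finset E, sampleWeight δ s * (if e ∈ s then (1:ℝ) else 0) :=
          Finset.sum_congr rfl fun e _ => (hPe e).symm
      _ = ∑ s : Finset E, ∑ e : E, sampleWeight δ s * (if e ∈ s then (1:ℝ) else 0) :=
          Finset.sum_comm
      _ = ∑ s : Finset E, sampleWeight δ s * (s.card : ℝ) := by
          refine Finset.sum_congr rfl fun s _ => ?_
          rw [hcount, Finset.mul_sum]
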